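/- Let ~ be the equivalence relation on triples (α, β, γ) ∈ ℕ³ generated by the moves (A), (B), (C) below. Then for all α ≥ 0 and β ≥ 1 with α + β ≥ 2, (α, β, 0) ~ (0, 2, 0). -/

import Mathlib

/-- One-step moves (A), (B), (C) on signatures `(α, β, γ) ∈ ℕ³`, encoding passage
to index-`n` subgroups of Schottky-type groups. -/
inductive STStep : ℕ × ℕ × ℕ → ℕ × ℕ × ℕ → Prop
  | A (n α β γ R S : ℕ) (hn : 1 ≤ n) (hα : 1 ≤ α)
      (hR : R ≤ β * (n / 2)) (hS : S ≤ γ * (n / 2)) :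
      STStep (α, β, γ) (1 + n * (α - 1) + R + S, n * β - R, n * γ - S)
  | B (n α β γ R S : ℕ) (hn : 1 ≤ n) (hβ : 1 ≤ β)
      (hR : R ≤ (β - 1) * (n / 2)) (hS : S ≤ γ * (n / 2)) :
      STStep (α, β, γ) (n * α + R + S, 1 + n * (β - 1) - R, n * γ - S)
  | C (n α β γ R S : ℕ) (hn : 1 ≤ n) (hγ : 1 ≤ γ)
      (hR : R ≤ β * (n / 2)) (hS : S ≤ (γ - 1) * (n / 2)) :
      STStep (α, β, γ) (n * α + R + S, n * β - R, 1 + n * (γ - 1) - S)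

/-- The equivalence relation on signatures generated by the moves (A), (B), (C). -/
def STEquiv : ℕ × ℕ × ℕ → ℕ × ℕ × ℕ → Prop := Relation.EqvGen STStep

/-- `pe k = 2^k - 1`. -/
def pe : ℕ → ℕ
  | 0 => 0
  | k+1 => 2 * pe k + 1

lemma pe_add_one (k : ℕ) : pe k + 1 = 2 ^ k := by
  induction k with
  | zero => rfl
  | succ k ih => rw [pow_succ]; simp only [pe]; omega

lemma triple_eq {x1 x2 x3 y1 y2 y3 : ℕ} (e1 : x1 = y1) (e2 : x2 = y2) (e3 : x3 = y3) :
    ((x1, x2, x3) : ℕ × ℕ × ℕ) = (y1, y2, y3) := by rw [e1, e2, e3]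

lemma equiv_pe (k : ℕ) : STEquiv (0,2,0) (pe k, 2, 0) := by
  induction k with
  | zero => exact Relation.EqvGen.refl _
  | succ k ih =>
    refine Relation.EqvGen.trans _ _ _ ih (Relation.EqvGen.rel _ _ ?_)
    show STStep (pe k, 2, 0) (2 * pe k + 1, 2, 0)
    rcases Nat.eq_zero_or_pos (pe k) with h | h
    · rw [h]
      have hs := STStep.B 2 0 2 0 1 0 (by norm_num) (by norm_num) (by norm_num) (by norm_num)
      have he : ((2*0+1+0 : ℕ), (1+2*(2-1)-1 : ℕ), (2*0-0 : ℕ)) = ((2*0 + 1 : ℕ), 2, 0) :=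
        triple_eq (by omega) (by omega) (by omega)
      rw [← he]; exact hs
    · have hs := STStep.A 2 (pe k) 2 0 2 0 (by norm_num) h (by norm_num) (by norm_num)
      have he : ((1+2*(pe k - 1)+2+0 : ℕ), (2*2-2 : ℕ), (2*0-0 : ℕ))
          = ((2*pe k + 1 : ℕ), 2, 0) :=
        triple_eq (by omega) (by omega) (by omega)
      rw [← he]; exact hs

/-- Meeting lemma. -/
lemma meet (a β P c : ℕ) (hβ : 1 ≤ β) (key : (P+1)*β = a + β + c) (hc : c < a + β) :
    STEquiv (a+1, β, 0) (P, 2, 0) := by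
  have hm : 1 ≤ a + β := by omega
  have key' : P * β + β = a + β + c := by
    have h' := key; rw [add_mul, one_mul] at h'; linarith
  have hPb : P * β = a + c := by linarith
  have hz : (P:ℤ) * β = (a:ℤ) + c := by exact_mod_cast hPb
  have hkey2 : 2*(P+1)*β = 2*(a + β + c) := by rw [mul_assoc, key]
  rcases Nat.eq_zero_or_pos c with hc0 | hcpos
  · -- c = 0 : R = 0, R' = 1
    subst hc0
    have s1 := STStep.A (2*(P+1)) (a+1) β 0 0 0 (by omega) (by omega) (by omega) (by omega)
    have s2 := STStep.B (2*(a+β)) P 2 0 1 0 (by omega) (by norm_num)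
      (by have hd : (2*(a+β))/2 = a+β := by omega
          rw [hd]; omega) (by omega)
    have e1 : ((1 + 2*(P+1)*((a+1)-1) + 0 + 0 : ℕ), (2*(P+1)*β - 0 : ℕ), (2*(P+1)*0 - 0 : ℕ))
        = ((2*(a+β)*P + 1 : ℕ), (2*(a+β) : ℕ), (0 : ℕ)) := by
      refine triple_eq ?_ ?_ (by omega)
      · have : (a+1)-1 = a := by omega
        rw [this]; zify; linear_combination (-2 : ℤ)*hz
      · rw [Nat.sub_zero]; zify; linear_combination (2 : ℤ)*hz
    have e2 : ((2*(a+β)*P + 1 + 0 : ℕ), (1 + 2*(a+β)*(2-1) - 1 : ℕ), (2*(a+β)*0 - 0 : ℕ))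
        = ((2*(a+β)*P + 1 : ℕ), (2*(a+β) : ℕ), (0 : ℕ)) := by
      refine triple_eq (by ring) ?_ (by simp)
      generalize 2*(a+β) = t
      omega
    rw [e1] at s1; rw [e2] at s2
    exact Relation.EqvGen.trans _ _ _ (Relation.EqvGen.rel _ _ s1)
      (Relation.EqvGen.symm _ _ (Relation.EqvGen.rel _ _ s2))
  · -- c ≥ 1 : R = 2c-1, R' = 0
    obtain ⟨c', rfl⟩ : ∃ c', c = c' + 1 := ⟨c - 1, by omega⟩
    have hz' : (P:ℤ) * β = (a:ℤ) + c' + 1 := by push_cast at hz; linarith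
    have hR : 2*c'+1 ≤ β * ((2*(P+1))/2) := by
      have hd : (2*(P+1))/2 = P+1 := by omega
      have h3 : β*(P+1) = a + β + (c'+1) := by rw [mul_comm]; exact key
      rw [hd, h3]; omega
    have s1 := STStep.A (2*(P+1)) (a+1) β 0 (2*c'+1) 0 (by omega) (by omega) hR (by omega)
    have s2 := STStep.B (2*(a+β)) P 2 0 0 0 (by omega) (by norm_num) (by omega) (by omega)
    have hsub : (2*c'+1 : ℕ) ≤ 2*(P+1)*β := by rw [hkey2]; omega
    have e1 : ((1 + 2*(P+1)*((a+1)-1) + (2*c'+1) + 0 : ℕ), (2*(P+1)*β - (2*c'+1) : ℕ),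
        (2*(P+1)*0 - 0 : ℕ))
        = ((2*(a+β)*P : ℕ), (1 + 2*(a+β) : ℕ), (0 : ℕ)) := by
      refine triple_eq ?_ ?_ (by omega)
      · have : (a+1)-1 = a := by omega
        rw [this]; zify; linear_combination (-2 : ℤ)*hz'
      · zify [hsub]; linear_combination (2 : ℤ)*hz'
    have e2 : ((2*(a+β)*P + 0 + 0 : ℕ), (1 + 2*(a+β)*(2-1) - 0 : ℕ), (2*(a+β)*0 - 0 : ℕ))
        = ((2*(a+β)*P : ℕ), (1 + 2*(a+β) : ℕ), (0 : ℕ)) := by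
      refine triple_eq (by ring) ?_ (by simp)
      generalize 2*(a+β) = t
      omega
    rw [e1] at s1; rw [e2] at s2
    exact Relation.EqvGen.trans _ _ _ (Relation.EqvGen.rel _ _ s1)
      (Relation.EqvGen.symm _ _ (Relation.EqvGen.rel _ _ s2))

/-- Part (2) of the Main Theorem: every signature `(α, β, 0)` with `β ≥ 1` and
`α + β ≥ 2` is equivalent to `(0, 2, 0)`. -/
theorem stmt10 (α β : ℕ) (hβ : 1 ≤ β) (h : 2 ≤ α + β) :
    STEquiv (α, β, 0) (0, 2, 0) := by
  rcases Nat.eq_zero_or_pos α with rfl | hα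
  · -- α = 0, β ≥ 2 : one B step from (0,2,0)
    have hs := STStep.B (β-1) 0 2 0 0 0 (by omega) (by norm_num) (by omega) (by omega)
    have he : (((β-1)*0 + 0 + 0 : ℕ), (1 + (β-1)*(2-1) - 0 : ℕ), ((β-1)*0 - 0 : ℕ))
        = ((0 : ℕ), β, (0 : ℕ)) :=
      triple_eq (by omega) (by omega) (by omega)
    rw [he] at hs
    exact Relation.EqvGen.symm _ _ (Relation.EqvGen.rel _ _ hs)
  · obtain ⟨a, rfl⟩ : ∃ a, α = a + 1 := ⟨α - 1, by omega⟩
    have hex : ∃ K, a + β ≤ 2^K * β := by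
      refine ⟨a + β, le_trans (Nat.lt_two_pow_self (n := a+β)).le ?_⟩
      exact Nat.le_mul_of_pos_right _ hβ
    set K := Nat.find hex with hK
    have h1 : a + β ≤ 2^K * β := Nat.find_spec hex
    have hstrict : 2^K * β < 2*(a + β) := by
      rcases Nat.eq_zero_or_pos K with hK0 | hKpos
      · rw [hK0, pow_zero, one_mul]; omega
      · have hmin : 2^(K-1) * β < a + β :=
          Nat.lt_of_not_le (Nat.find_min hex (show K-1 < K by omega))
        calc 2^K*β = 2*(2^(K-1)*β) := by
              rw [← mul_assoc, ← pow_succ']; congr 2; omega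
          _ < 2*(a+β) := by omega
    rw [← pe_add_one K] at h1 hstrict
    obtain ⟨c, key⟩ := Nat.exists_eq_add_of_le h1
    have hc : c < a + β := by omega
    exact Relation.EqvGen.trans _ _ _ (meet a β (pe K) c hβ key hc)
      (Relation.EqvGen.symm _ _ (equiv_pe K))
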